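/- Let C be a K-linear code in L^m with generator matrix A ∈ M_{k×m}(L), and let (V_1, ..., V_m) be the tuple of column spaces of A (over K). Then dim_K C = dim_K (V_1 + ... + V_m). -/

import Mathlib

theorem stmt_14 (K L : Type*) [Field K] [Fintype K] [Field L] [Fintype L] [Algebra K L]
    (n : ℕ) (b : Module.Basis (Fin n) K L)
    (k m : ℕ) (A : Fin k → (Fin m → L)) (hA : LinearIndependent K A)
    (C : Submodule K (Fin m → L)) (hC : C = Submodule.span K (Set.range A))
    (V : Fin m → Submodule K (Fin k → K))
    (hV : ∀ j, V j = Submodule.span K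
      (Set.range fun t : Fin n => fun i : Fin k => b.repr (A i j) t)) :
    Module.finrank K C = Module.finrank K (⨆ j, V j : Submodule K (Fin k → K)) := by
  have h1 : Module.finrank K C = k := by
    rw [hC, finrank_span_eq_card hA, Fintype.card_fin]
  have h2 : (⨆ j, V j) = ⊤ := by
    by_contra h
    obtain ⟨φ, hφ, hφ0⟩ := Submodule.exists_dual_map_eq_bot_of_lt_top
      (lt_top_iff_ne_top.mpr h) inferInstance
    -- φ vanishes on ⨆ V j
    have hvan : ∀ x ∈ (⨆ j, V j), φ x = 0 := by
      intro x hx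
      have : φ x ∈ Submodule.map φ (⨆ j, V j) := Submodule.mem_map_of_mem hx
      rw [hφ0] at this
      simpa using this
    set c : Fin k → K := fun i => φ (Pi.single i 1) with hc
    have hφeq : ∀ x : Fin k → K, φ x = ∑ i, x i * c i := by
      intro x
      conv_lhs => rw [pi_eq_sum_univ x]
      rw [map_sum]
      refine Finset.sum_congr rfl fun i _ => ?_
      rw [map_smul, smul_eq_mul, hc]
      congr 1
      congr 1
      ext j
      by_cases hij : i = j
      · subst hij; simp
      · simp [hij, Pi.single_apply, Ne.symm hij]
    have hzero : ∀ j t, (∑ i, (b.repr (A i j)) t * c i) = 0 := by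
      intro j t
      have hmem : (fun i : Fin k => b.repr (A i j) t) ∈ V j := by
        rw [hV j]
        exact Submodule.subset_span ⟨t, rfl⟩
      have := hvan _ (Submodule.mem_iSup_of_mem j hmem)
      rwa [hφeq] at this
    have hsum : ∑ i, c i • A i = 0 := by
      funext j
      have hj : (∑ i, c i • A i) j = ∑ i, c i • A i j := by simp
      have : (∑ i, c i • A i) j = 0 := by
        rw [← b.repr.map_eq_zero_iff, hj, map_sum]
        ext t
        simp only [map_smul, Finsupp.coe_finset_sum, Finset.sum_apply, Finsupp.coe_smul,
          Pi.smul_apply, smul_eq_mul, Finsupp.coe_zero, Pi.zero_apply]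
        rw [← hzero j t]
        exact Finset.sum_congr rfl fun i _ => mul_comm _ _
      simpa using this
    have hc0 : ∀ i, c i = 0 := by
      have := linearIndependent_iff'.mp hA Finset.univ c (by simpa using hsum)
      intro i; exact this i (Finset.mem_univ i)
    apply hφ
    refine LinearMap.ext fun x => ?_
    rw [hφeq]
    simp [hc0]
  rw [h1, h2, finrank_top, Module.finrank_pi]
  simp
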